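/- Under the hypotheses that x is not ultimately periodic, the Rauzy graph G_n(x) is of ∞-shape with cycles U (essentially right-special, edge-length k) and V (edge-length ℓ), and p(m, x)/m ≤ 4/3 for all m > n: if both U V^b U and U V^{b'} U are factors of x for integers b, b' ≥ 1, then b = b'. -/

import Mathlib

open Filter

variable {A : Type*}

/-- The factor of the infinite word `x` of length `n` starting at position `j` (0-indexed). -/
def subwordAt (x : ℕ → A) (j n : ℕ) : List A := (List.range n).map fun i => x (j + i)

/-- `w` is a factor (subword) of the infinite word `x`. -/
def IsFactor (w : List A) (x : ℕ → A) : Prop := ∃ j, subwordAt x j w.length = w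

/-- The subword complexity `p(n, x)`: the number of distinct length-`n` factors of `x`. -/
noncomputable def complexity (x : ℕ → A) (n : ℕ) : ℕ :=
  Set.ncard {w : List A | w.length = n ∧ IsFactor w x}

/-- `x` is ultimately periodic. -/
def UltimatelyPeriodic (x : ℕ → A) : Prop := ∃ N T, 0 < T ∧ ∀ i ≥ N, x (i + T) = x i

/-- `w` is a left-special factor of `x`. -/
def LeftSpecial (w : List A) (x : ℕ → A) : Prop :=
  ∃ a b : A, a ≠ b ∧ IsFactor (a :: w) x ∧ IsFactor (b :: w) x

/-- `w` is a right-special factor of `x`. -/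
def RightSpecial (w : List A) (x : ℕ → A) : Prop :=
  ∃ a b : A, a ≠ b ∧ IsFactor (w ++ [a]) x ∧ IsFactor (w ++ [b]) x

/-- `w` occurs infinitely many times in `x`. -/
def OccursInfinitely (w : List A) (x : ℕ → A) : Prop :=
  {j : ℕ | subwordAt x j w.length = w}.Infinite

/-- `x` is `n`-recurrent: every length-`n` factor occurs infinitely often. -/
def NRecurrent (n : ℕ) (x : ℕ → A) : Prop :=
  ∀ j : ℕ, {i : ℕ | subwordAt x i n = subwordAt x j n}.Infinite

/-- The shift of `x` by `s` places. -/
def shiftWord (x : ℕ → A) (s : ℕ) : ℕ → A := fun i => x (s + i)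

/-- `s_m`: the length of the `m`-th non-recurrent prefix of `x`. -/
noncomputable def srec (x : ℕ → A) (m : ℕ) : ℕ := sInf {s : ℕ | NRecurrent m (shiftWord x s)}

/-- `z_m`: the maximal `m`-recurrent tail of `x`, so that `x = a_m z_m`. -/
noncomputable def ztail (x : ℕ → A) (m : ℕ) : ℕ → A := shiftWord x (srec x m)

/-- The repetition function `r(n, x)`: the least `m ≥ 1` such that
`x_{m+1} … x_{m+n} = x_{i+1} … x_{i+n}` for some `0 ≤ i < m`. -/
noncomputable def repFn (x : ℕ → A) (n : ℕ) : ℕ :=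
  sInf {m : ℕ | 0 < m ∧ ∃ i < m, subwordAt x m n = subwordAt x i n}

/-- A right-special factor `w` is essential if it is a suffix of right-special
factors of every length `m ≥ |w|`. -/
def EssentialRightSpecial (w : List A) (x : ℕ → A) : Prop :=
  RightSpecial w x ∧
    ∀ m, w.length ≤ m → ∃ W : List A, W.length = m ∧ RightSpecial W x ∧ W.drop (m - w.length) = w

/-- `C` is (the word read along) a cycle at `w` in the Rauzy graph `𝒢_n(y)`:
it has length `> n`, prefix `w`, suffix `w`, and is a factor of `y`. -/
def IsCycleAt (y : ℕ → A) (n : ℕ) (w C : List A) : Prop :=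
  n < C.length ∧ C.take n = w ∧ C.drop (C.length - n) = w ∧ IsFactor C y

/-- The Rauzy graph `𝒢_n(y)` is of `∞`-shape with bi-special vertex `w`
and the two (simple) cycles `U` and `V`. -/
def InftyShape (y : ℕ → A) (n : ℕ) (w U V : List A) : Prop :=
  w.length = n ∧ LeftSpecial w y ∧ RightSpecial w y ∧
  (∀ v : List A, v.length = n → IsFactor v y → (LeftSpecial v y ∨ RightSpecial v y) → v = w) ∧
  IsCycleAt y n w U ∧ IsCycleAt y n w V ∧ U ≠ V ∧
  (∀ j, 0 < j → j < U.length - n → (U.drop j).take n ≠ w) ∧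
  (∀ j, 0 < j → j < V.length - n → (V.drop j).take n ≠ w) ∧
  (∀ v : List A, v.length = n → IsFactor v y →
    (∃ j ≤ U.length - n, (U.drop j).take n = v) ∨ (∃ j ≤ V.length - n, (V.drop j).take n = v))

/-- The word read along the concatenated path `U V^b U`, where `U`, `V` are
cycles at a vertex of length `n` (gluing overlaps of length `n`). -/
def cyclePow (n : ℕ) (U V : List A) (b : ℕ) : List A :=
  U ++ (List.replicate b (V.drop n)).flatten ++ U.drop n

/-- The irrationality exponent of a real number, valued in `ℝ≥0∞`. -/
noncomputable def irrationalityExponent (ξ : ℝ) : ENNReal :=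
  ⨆ (μ : ℝ) (_ : {q : ℕ | 0 < q ∧ ∃ p : ℤ, |ξ - p / q| < 1 / (q : ℝ) ^ μ}.Infinite),
    ENNReal.ofReal μ

section AuxiliaryLemmas

variable {A : Type*}

lemma subwordAt_length (x : ℕ → A) (j n : ℕ) : (subwordAt x j n).length = n := by
  simp [subwordAt]

lemma subwordAt_take (x : ℕ → A) (j n m : ℕ) :
    (subwordAt x j n).take m = subwordAt x j (min m n) := by
  simp [subwordAt, ← List.map_take, List.take_range]

lemma subwordAt_drop (x : ℕ → A) (j n d : ℕ) :
    (subwordAt x j n).drop d = subwordAt x (j + d) (n - d) := by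
  apply List.ext_getElem?
  intro i
  rcases lt_or_ge i (n - d) with h | h
  · rw [List.getElem?_drop]
    have h1 : d + i < n := by omega
    simp [subwordAt, List.getElem?_map, List.getElem?_range, h1, h]
    ring_nf
  · have h2 : ((subwordAt x j n).drop d).length ≤ i := by
      simp [subwordAt_length]; omega
    rw [List.getElem?_eq_none h2, List.getElem?_eq_none (by simp [subwordAt_length]; omega)]

lemma IsFactor.take {w : List A} {x : ℕ → A} (h : IsFactor w x) (m : ℕ) :
    IsFactor (w.take m) x := by
  obtain ⟨j, hj⟩ := h
  exact ⟨j, by rw [List.length_take, ← hj, subwordAt_take, subwordAt_length, min_comm]⟩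

lemma IsFactor.drop {w : List A} {x : ℕ → A} (h : IsFactor w x) (d : ℕ) :
    IsFactor (w.drop d) x := by
  obtain ⟨j, hj⟩ := h
  exact ⟨j + d, by rw [List.length_drop, ← hj, ← subwordAt_drop, subwordAt_length]⟩

lemma IsFactor.of_suffix {u w : List A} {x : ℕ → A} (hs : u <:+ w) (h : IsFactor w x) :
    IsFactor u x := by
  obtain ⟨t, rfl⟩ := hs
  simpa [List.drop_left] using h.drop t.length

lemma IsFactor.of_prefix {u w : List A} {x : ℕ → A} (hs : u <+: w) (h : IsFactor w x) :
    IsFactor u x := by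
  obtain ⟨t, rfl⟩ := hs
  simpa [List.take_left] using h.take u.length

lemma RightSpecial.of_suffix {u w : List A} {x : ℕ → A} (hs : u <:+ w)
    (h : RightSpecial w x) : RightSpecial u x := by
  obtain ⟨t, rfl⟩ := hs
  obtain ⟨a, c, hac, f1, f2⟩ := h
  refine ⟨a, c, hac, ?_, ?_⟩
  · exact IsFactor.of_suffix (by rw [List.append_assoc]; exact List.suffix_append _ _) f1
  · exact IsFactor.of_suffix (by rw [List.append_assoc]; exact List.suffix_append _ _) f2

lemma RightSpecial.isFactor {w : List A} {x : ℕ → A} (h : RightSpecial w x) :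
    IsFactor w x := by
  obtain ⟨a, _, _, f1, _⟩ := h
  exact IsFactor.of_prefix ⟨[a], rfl⟩ f1

/-- the suffix of length `r`. -/
def suf (r : ℕ) (Z : List A) : List A := Z.drop (Z.length - r)

lemma suf_length {r : ℕ} {Z : List A} (h : r ≤ Z.length) : (suf r Z).length = r := by
  simp [suf]; omega

lemma suf_suffix (r : ℕ) (Z : List A) : suf r Z <:+ Z := List.drop_suffix _ _

lemma suf_eq_of_suffix {r : ℕ} {s Z : List A} (h : s <:+ Z) (hr : r ≤ s.length) :
    suf r s = suf r Z := by
  obtain ⟨t, rfl⟩ := h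
  rw [suf, suf, List.length_append]
  have : t.length + s.length - r = t.length + (s.length - r) := by omega
  rw [this, List.drop_append]
  simp

end AuxiliaryLemmas

section edge
/-- Abstract "edge divergence" lemma. -/
lemma edge_lemma (F : List A → Prop)
    (Fdrop : ∀ w d, F w → F (w.drop d))
    (Ftake : ∀ w d, F w → F (w.take d))
    (n : ℕ) (w U V : List A)
    (huniq : ∀ v : List A, v.length = n → F v →
        (∃ a c : A, a ≠ c ∧ F (v ++ [a]) ∧ F (v ++ [c])) → v = w)
    (hFU : F U) (hFV : F V)
    (hUn : n < U.length) (hVn : n < V.length)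
    (hUw : U.take n = w) (hVw : V.take n = w)
    (hUw2 : U.drop (U.length - n) = w) (hVw2 : V.drop (V.length - n) = w)
    (hUs : ∀ j, 0 < j → j < U.length - n → (U.drop j).take n ≠ w)
    (hVs : ∀ j, 0 < j → j < V.length - n → (V.drop j).take n ≠ w)
    (hUV : U ≠ V) :
    U[n]? ≠ V[n]? := by
  have hwlen : w.length = n := by rw [← hUw]; simp [hUn.le]
  -- the set of disagreement indices
  have hne : ∃ j : ℕ, U[j]? ≠ V[j]? := by
    by_contra h
    push_neg at h
    exact hUV (List.ext_getElem? h)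
  classical
  let j0 := Nat.find hne
  have hj0 : U[j0]? ≠ V[j0]? := Nat.find_spec hne
  have hmin : ∀ j < j0, U[j]? = V[j]? := fun j hj => by
    have := Nat.find_min hne hj
    simpa using this
  -- j0 ≥ n
  have hj0n : n ≤ j0 := by
    by_contra h
    push_neg at h
    apply hj0
    have h1 : U[j0]? = w[j0]? := by
      rw [← hUw, List.getElem?_take]; simp [h]
    have h2 : V[j0]? = w[j0]? := by
      rw [← hVw, List.getElem?_take]; simp [h]
    rw [h1, h2]
  intro hcon
  have hj0n' : n < j0 := lt_of_le_of_ne hj0n (fun h => hj0 (h ▸ hcon))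
  -- helper: windows inside the common part
  have window_eq : ∀ j, j + n ≤ j0 → (U.drop j).take n = (V.drop j).take n := by
    intro j hj
    apply List.ext_getElem?
    intro i
    rw [List.getElem?_take, List.getElem?_take]
    split
    · rw [List.getElem?_drop, List.getElem?_drop]
      exact hmin _ (by omega)
    · rfl
  by_cases hc : j0 < U.length ∧ j0 < V.length
  · obtain ⟨hcU, hcV⟩ := hc
    set j := j0 - n with hjdef
    have hj1 : 0 < j := by omega
    have hjn : j + n = j0 := by omega
    set v := (U.drop j).take n with hvdef
    have hvV : v = (V.drop j).take n := window_eq j (by omega)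
    have hvlen : v.length = n := by
      simp [hvdef]; omega
    have hFv : F v := Ftake _ _ (Fdrop _ _ hFU)
    have hva : v ++ [U[j0]] = (U.drop j).take (n + 1) := by
      rw [List.take_succ, hvdef]
      congr 1
      rw [List.getElem?_drop]
      simp [hjn, hcU]
    have hvc : v ++ [V[j0]] = (V.drop j).take (n + 1) := by
      rw [List.take_succ, hvV]
      congr 1
      rw [List.getElem?_drop]
      simp [hjn, hcV]
    have hac : U[j0] ≠ V[j0] := by
      intro h
      apply hj0
      rw [List.getElem?_eq_getElem hcU, List.getElem?_eq_getElem hcV, h]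
    have hvw : v = w := by
      apply huniq v hvlen hFv
      exact ⟨U[j0], V[j0], hac,
        hva ▸ Ftake _ _ (Fdrop _ _ hFU), hvc ▸ Ftake _ _ (Fdrop _ _ hFV)⟩
    exact hUs j hj1 (by omega) hvw
  · -- one is a "prefix" of the other up to j0
    rcases not_and_or.mp hc with hcU | hcV
    · push_neg at hcU
      have hcV : j0 < V.length := by
        by_contra h
        push_neg at h
        exact hj0 (by rw [List.getElem?_eq_none (by omega), List.getElem?_eq_none (by omega)])
      have hUV' : U.length < V.length := by omega
      set j := U.length - n with hjdef
      have : (V.drop j).take n = w := by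
        rw [← window_eq j (by omega), hUw2, ← hwlen, List.take_length]
      exact hVs j (by omega) (by omega) this
    · push_neg at hcV
      have hcU : j0 < U.length := by
        by_contra h
        push_neg at h
        exact hj0 (by rw [List.getElem?_eq_none (by omega), List.getElem?_eq_none (by omega)])
      have hUV' : V.length < U.length := by omega
      set j := V.length - n with hjdef
      have : (U.drop j).take n = w := by
        rw [window_eq j (by omega), hVw2, ← hwlen, List.take_length]
      exact hUs j (by omega) (by omega) this
end edge
section counting

variable [Finite A] (x : ℕ → A)

lemma factorSet_finite (m : ℕ) : {w : List A | w.length = m ∧ IsFactor w x}.Finite :=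
  (List.finite_length_eq A m).subset fun w hw => hw.1

lemma complexity_zero : complexity x 0 = 1 := by
  have : {w : List A | w.length = 0 ∧ IsFactor w x} = {([] : List A)} := by
    ext w
    simp only [Set.mem_setOf_eq, Set.mem_singleton_iff, List.length_eq_zero_iff]
    constructor
    · rintro ⟨h, -⟩; exact h
    · rintro rfl; exact ⟨rfl, ⟨0, rfl⟩⟩
  rw [complexity, this, Set.ncard_singleton]

open Classical in
/-- extension map: extends a factor by one letter on the right. -/
noncomputable def extendR (m : ℕ) (v : List A) : List A :=
  if h : IsFactor v x then subwordAt x h.choose (m + 1) else []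

lemma extendR_take {m : ℕ} {v : List A} (hv : v.length = m) (h : IsFactor v x) :
    (extendR x m v).take m = v := by
  rw [extendR, dif_pos h]
  rw [subwordAt_take, min_eq_left (Nat.le_succ m), ← hv]
  exact h.choose_spec

lemma extendR_mem {m : ℕ} {v : List A} (hv : v.length = m) (h : IsFactor v x) :
    (extendR x m v) ∈ {w : List A | w.length = m + 1 ∧ IsFactor w x} := by
  rw [extendR, dif_pos h]
  exact ⟨subwordAt_length _ _ _, ⟨h.choose, by rw [subwordAt_length]⟩⟩

/-- Given a right-special factor R of length m, there is a one-letter extension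
different from `extendR x m R`. -/
lemma exists_other_extension {m : ℕ} {R : List A} (hR : R.length = m)
    (hrs : RightSpecial R x) :
    ∃ e : List A, e.length = m + 1 ∧ IsFactor e x ∧ e.take m = R ∧ e ≠ extendR x m R := by
  obtain ⟨a, c, hac, hfa, hfc⟩ := hrs
  by_cases h : extendR x m R = R ++ [a]
  · refine ⟨R ++ [c], by simp [hR], hfc, by simp [← hR], ?_⟩
    rw [h]
    simp [hac.symm]
  · exact ⟨R ++ [a], by simp [hR], hfa, by simp [← hR], fun hh => h hh.symm⟩

lemma complexity_step_two {m : ℕ} {R S : List A}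
    (hR : R.length = m) (hS : S.length = m) (hRS : R ≠ S)
    (hfR : IsFactor R x) (hfS : IsFactor S x)
    (hrsR : RightSpecial R x) (hrsS : RightSpecial S x) :
    complexity x m + 2 ≤ complexity x (m + 1) := by
  set Fm := {w : List A | w.length = m ∧ IsFactor w x}
  set Fm1 := {w : List A | w.length = m + 1 ∧ IsFactor w x}
  obtain ⟨eR, heR1, heR2, heR3, heR4⟩ := exists_other_extension x hR hrsR
  obtain ⟨eS, heS1, heS2, heS3, heS4⟩ := exists_other_extension x hS hrsS
  have hinj : Set.InjOn (extendR x m) Fm := by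
    intro u hu v hv huv
    rw [← extendR_take x hu.1 hu.2, ← extendR_take x hv.1 hv.2, huv]
  have himsub : (extendR x m) '' Fm ⊆ Fm1 := by
    rintro _ ⟨v, hv, rfl⟩
    exact extendR_mem x hv.1 hv.2
  have heRnotim : eR ∉ (extendR x m) '' Fm := by
    rintro ⟨v, hv, hveq⟩
    have : v = R := by
      rw [← extendR_take x hv.1 hv.2, hveq, heR3]
    exact heR4 (by rw [← hveq, this])
  have heSnotim : eS ∉ (extendR x m) '' Fm := by
    rintro ⟨v, hv, hveq⟩
    have : v = S := by
      rw [← extendR_take x hv.1 hv.2, hveq, heS3]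
    exact heS4 (by rw [← hveq, this])
  have heRS : eR ≠ eS := by
    intro h
    exact hRS (by rw [← heR3, h, heS3])
  have hfin : ((extendR x m) '' Fm).Finite := ((factorSet_finite x m).image _)
  have hsub : insert eR (insert eS ((extendR x m) '' Fm)) ⊆ Fm1 := by
    intro u hu
    rcases hu with rfl | rfl | hu
    · exact ⟨heR1, heR2⟩
    · exact ⟨heS1, heS2⟩
    · exact himsub hu
  calc complexity x m + 2
      = ((extendR x m) '' Fm).ncard + 2 := by
        rw [Set.ncard_image_of_injOn hinj]; rfl
    _ = (insert eR (insert eS ((extendR x m) '' Fm))).ncard := by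
        rw [Set.ncard_insert_of_notMem (by intro hmem; rcases hmem with rfl | hmem; exacts [heRS rfl, heRnotim hmem]) (hfin.insert eS),
          Set.ncard_insert_of_notMem heSnotim hfin]
    _ ≤ Fm1.ncard := Set.ncard_le_ncard hsub (factorSet_finite x (m+1))

lemma complexity_step_one {m : ℕ} {R : List A}
    (hR : R.length = m) (hfR : IsFactor R x) (hrsR : RightSpecial R x) :
    complexity x m + 1 ≤ complexity x (m + 1) := by
  set Fm := {w : List A | w.length = m ∧ IsFactor w x}
  set Fm1 := {w : List A | w.length = m + 1 ∧ IsFactor w x}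
  obtain ⟨eR, heR1, heR2, heR3, heR4⟩ := exists_other_extension x hR hrsR
  have hinj : Set.InjOn (extendR x m) Fm := by
    intro u hu v hv huv
    rw [← extendR_take x hu.1 hu.2, ← extendR_take x hv.1 hv.2, huv]
  have himsub : (extendR x m) '' Fm ⊆ Fm1 := by
    rintro _ ⟨v, hv, rfl⟩
    exact extendR_mem x hv.1 hv.2
  have heRnotim : eR ∉ (extendR x m) '' Fm := by
    rintro ⟨v, hv, hveq⟩
    have : v = R := by
      rw [← extendR_take x hv.1 hv.2, hveq, heR3]
    exact heR4 (by rw [← hveq, this])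
  have hfin : ((extendR x m) '' Fm).Finite := ((factorSet_finite x m).image _)
  have hsub : insert eR ((extendR x m) '' Fm) ⊆ Fm1 := by
    intro u hu
    rcases hu with rfl | hu
    · exact ⟨heR1, heR2⟩
    · exact himsub hu
  calc complexity x m + 1
      = ((extendR x m) '' Fm).ncard + 1 := by
        rw [Set.ncard_image_of_injOn hinj]; rfl
    _ = (insert eR ((extendR x m) '' Fm)).ncard := by
        rw [Set.ncard_insert_of_notMem heRnotim hfin]
    _ ≤ Fm1.ncard := Set.ncard_le_ncard hsub (factorSet_finite x (m+1))

end counting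
section edges
variable {A : Type*}

lemma first_edge {x : ℕ → A} {n : ℕ} {w U V : List A}
    (huniq0 : ∀ v : List A, v.length = n → IsFactor v x →
      (LeftSpecial v x ∨ RightSpecial v x) → v = w)
    (hUfac : IsFactor U x) (hVfac : IsFactor V x)
    (hUn : n < U.length) (hVn : n < V.length)
    (hUw : U.take n = w) (hVw : V.take n = w)
    (hUw2 : U.drop (U.length - n) = w) (hVw2 : V.drop (V.length - n) = w)
    (hUs : ∀ j, 0 < j → j < U.length - n → (U.drop j).take n ≠ w)
    (hVs : ∀ j, 0 < j → j < V.length - n → (V.drop j).take n ≠ w)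
    (hUV : U ≠ V) : U[n]? ≠ V[n]? := by
  apply edge_lemma (fun u => IsFactor u x) (fun u d h => h.drop d) (fun u d h => h.take d)
    n w U V ?_ hUfac hVfac hUn hVn hUw hVw hUw2 hVw2 hUs hVs hUV
  rintro v hl hf ⟨a, c, hac, f1, f2⟩
  exact huniq0 v hl hf (Or.inr ⟨a, c, hac, f1, f2⟩)

lemma rev_window (l : List A) (j n : ℕ) (hj : j + n ≤ l.length) :
    (l.reverse.drop j).take n = ((l.drop (l.length - j - n)).take n).reverse := by
  have h1 : l.reverse.drop j = (l.take (l.length - j)).reverse := by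
    rw [List.reverse_take]
    congr 1
    omega
  rw [h1]
  have h2 : ((l.take (l.length - j)).reverse).take n
      = ((l.take (l.length - j)).drop (l.length - j - n)).reverse := by
    rw [List.reverse_drop]
    congr 1
    rw [List.length_take]
    omega
  rw [h2, List.drop_take]
  congr 2
  omega

lemma last_edge {x : ℕ → A} {n : ℕ} {w U V : List A}
    (huniq0 : ∀ v : List A, v.length = n → IsFactor v x →
      (LeftSpecial v x ∨ RightSpecial v x) → v = w)
    (hUfac : IsFactor U x) (hVfac : IsFactor V x)
    (hUn : n < U.length) (hVn : n < V.length)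
    (hUw : U.take n = w) (hVw : V.take n = w)
    (hUw2 : U.drop (U.length - n) = w) (hVw2 : V.drop (V.length - n) = w)
    (hUs : ∀ j, 0 < j → j < U.length - n → (U.drop j).take n ≠ w)
    (hVs : ∀ j, 0 < j → j < V.length - n → (V.drop j).take n ≠ w)
    (hUV : U ≠ V) : U[U.length - 1 - n]? ≠ V[V.length - 1 - n]? := by
  have hwlen : w.length = n := by rw [← hUw]; simp [hUn.le]
  have simpl : ∀ (Z : List A), n < Z.length → Z.take n = w →
      (∀ j, 0 < j → j < Z.length - n → (Z.drop j).take n ≠ w) →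
      (∀ j, 0 < j → j < Z.reverse.length - n → (Z.reverse.drop j).take n ≠ w.reverse) := by
    intro Z hZn hZw hZs j hj1 hj2 heq
    rw [List.length_reverse] at hj2
    rw [rev_window Z j n (by omega)] at heq
    have heq' := List.reverse_injective heq
    exact hZs (Z.length - j - n) (by omega) (by omega) heq'
  have takerev : ∀ (Z : List A), n < Z.length → Z.drop (Z.length - n) = w →
      Z.reverse.take n = w.reverse := by
    intro Z hZn hZ2
    have := rev_window Z 0 n (by omega)
    simp only [List.drop_zero, Nat.sub_zero] at this
    rw [this, hZ2, ← hwlen, List.take_length]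
  have droprev : ∀ (Z : List A), n < Z.length → Z.take n = w →
      Z.reverse.drop (Z.reverse.length - n) = w.reverse := by
    intro Z hZn hZw
    have hlen : (Z.reverse.drop (Z.reverse.length - n)).length = n := by
      simp; omega
    have h0 : (Z.reverse.drop (Z.reverse.length - n)).take n
        = Z.reverse.drop (Z.reverse.length - n) := by
      rw [List.take_of_length_le (le_of_eq hlen)]
    rw [← h0]
    rw [List.length_reverse]
    rw [rev_window Z (Z.length - n) n (by omega)]
    rw [show Z.length - (Z.length - n) - n = 0 by omega, List.drop_zero, hZw]
  have key := edge_lemma (A := A) (fun u => IsFactor u.reverse x)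
    (fun u d h => by show IsFactor (u.drop d).reverse x; rw [List.reverse_drop]; exact h.take _)
    (fun u d h => by show IsFactor (u.take d).reverse x; rw [List.reverse_take]; exact h.drop _)
    n w.reverse U.reverse V.reverse
    (by
      rintro v hl hf ⟨a, c, hac, f1, f2⟩
      have h1 : IsFactor (a :: v.reverse) x := by simpa using f1
      have h2 : IsFactor (c :: v.reverse) x := by simpa using f2
      have := huniq0 v.reverse (by simpa using hl) hf (Or.inl ⟨a, c, hac, h1, h2⟩)
      rw [← this, List.reverse_reverse])
    (by simpa using hUfac) (by simpa using hVfac)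
    (by simpa using hUn) (by simpa using hVn)
    (takerev U hUn hUw2) (takerev V hVn hVw2)
    (droprev U hUn hUw) (droprev V hVn hVw)
    (simpl U hUn hUw hUs) (simpl V hVn hVw hVs)
    (fun h => hUV (List.reverse_injective h))
  rwa [List.getElem?_reverse (by omega), List.getElem?_reverse (by omega)] at key

end edges


section keypart
variable {A : Type*}

lemma key_false [Fintype A] (x : ℕ → A)
    (n k ℓ b b' : ℕ) (w U V : List A)
    (hshape : InftyShape x n w U V)
    (hU : U.length = n + k) (hV : V.length = n + ℓ)
    (hEss : EssentialRightSpecial U x)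
    (hcomp : ∀ m : ℕ, n < m → (complexity x m : ℝ) / (m : ℝ) ≤ 4 / 3)
    (hb : 1 ≤ b) (hbb' : b < b')
    (hfac : IsFactor (cyclePow n U V b) x) (hfac' : IsFactor (cyclePow n U V b') x) :
    False := by
  obtain ⟨hwlen, hLS, hRS, huniq0, hcycU, hcycV, hUVne, hUsimp, hVsimp, hcover⟩ := hshape
  obtain ⟨hUn, hUtake, hUdrop, hUfac⟩ := hcycU
  obtain ⟨hVn, hVtake, hVdrop, hVfac⟩ := hcycV
  have hk : 1 ≤ k := by omega
  have hl : 1 ≤ ℓ := by omega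
  set B := b * ℓ with hB
  have hbl : ℓ ≤ B := Nat.le_mul_of_pos_left ℓ hb
  set D2 := V.drop n with hD2
  have hD2len : D2.length = ℓ := by simp [hD2, hV]
  have hVsplit : V = w ++ D2 := by rw [← hVtake, hD2, List.take_append_drop]
  have hwsufV : w <:+ V := by rw [← hVdrop]; exact List.drop_suffix _ _
  have hwsufU : w <:+ U := by rw [← hUdrop]; exact List.drop_suffix _ _
  set flat : ℕ → List A := fun c => (List.replicate c D2).flatten with hflat
  have hflatlen : ∀ c, (flat c).length = c * ℓ := by
    intro c
    simp [hflat, List.length_flatten, List.map_replicate, List.sum_replicate, hD2len,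
      smul_eq_mul]
  have hflatsucc : ∀ c, flat (c + 1) = flat c ++ D2 := by
    intro c; simp only [hflat, List.replicate_succ', List.flatten_append, List.flatten_cons, List.flatten_nil, List.append_nil]
  have hflatadd : ∀ c d, flat (c + d) = flat c ++ flat d := by
    intro c d; simp only [hflat, List.replicate_add, List.flatten_append]
  have hends : ∀ c, w <:+ U ++ flat c := by
    intro c
    induction c with
    | zero => simpa [hflat] using hwsufU
    | succ c ih =>
      rw [hflatsucc, ← List.append_assoc]
      obtain ⟨P, hP⟩ := ih
      rw [← hP, List.append_assoc, ← hVsplit]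
      exact hwsufV.trans (List.suffix_append _ _)
  have hVsufQ : ∀ c, 1 ≤ c → V <:+ U ++ flat c := by
    intro c hc
    obtain ⟨d, rfl⟩ : ∃ d, c = d + 1 := ⟨c - 1, by omega⟩
    rw [hflatsucc, ← List.append_assoc]
    obtain ⟨P, hP⟩ := hends d
    rw [← hP, List.append_assoc, ← hVsplit]
    exact List.suffix_append _ _
  set Q := U ++ flat b with hQ
  set L0 := n + k + B with hL0
  have hQlen : Q.length = L0 := by
    rw [hQ, List.length_append, hflatlen, hU]
  have hcp : ∀ c, cyclePow n U V c = (U ++ flat c) ++ U.drop n := fun c => rfl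
  have hQfac : IsFactor Q x := IsFactor.of_prefix ⟨U.drop n, (hcp b).symm⟩ hfac
  have hfe : U[n]? ≠ V[n]? :=
    first_edge huniq0 hUfac hVfac hUn hVn hUtake hVtake hUdrop hVdrop hUsimp hVsimp hUVne
  have hle : U[U.length - 1 - n]? ≠ V[V.length - 1 - n]? :=
    last_edge huniq0 hUfac hVfac hUn hVn hUtake hVtake hUdrop hVdrop hUsimp hVsimp hUVne
  have hα : U.drop n = U[n] :: U.drop (n + 1) := List.drop_eq_getElem_cons hUn
  have hβ : D2 = V[n] :: V.drop (n + 1) := List.drop_eq_getElem_cons hVn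
  have hαβ : U[n] ≠ V[n] := fun h =>
    hfe (by rw [List.getElem?_eq_getElem hUn, List.getElem?_eq_getElem hVn, h])
  have hQrs : RightSpecial Q x := by
    refine ⟨U[n], V[n], hαβ, ?_, ?_⟩
    · apply IsFactor.of_prefix ?_ hfac
      rw [hcp]
      refine ⟨U.drop (n + 1), ?_⟩
      rw [List.append_assoc, List.singleton_append, ← hα]
    · apply IsFactor.of_prefix ?_ hfac'
      have h1 : Q ++ D2 = U ++ flat (b + 1) := by
        rw [hQ, hflatsucc, List.append_assoc]
      have h2 : U ++ flat b' = (Q ++ D2) ++ flat (b' - (b + 1)) := by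
        rw [h1, List.append_assoc, ← hflatadd]
        congr 2
        omega
      refine ⟨V.drop (n + 1) ++ (flat (b' - (b + 1)) ++ U.drop n), ?_⟩
      rw [hcp, h2]
      simp only [List.append_assoc]
      congr 1
      rw [List.singleton_append, ← List.cons_append, List.getElem_cons_drop]
  obtain ⟨hUrs, hEssAll⟩ := hEss
  obtain ⟨W, hWlen, hWrs, hWdropU⟩ := hEssAll L0 (by rw [hU]; omega)
  have hUsufW : U <:+ W := hWdropU ▸ List.drop_suffix _ _
  have hWfac := hWrs.isFactor
  -- distinctness of the two right-special families
  have hdistinct : ∀ m, n + 1 ≤ m → m ≤ L0 → suf m Q ≠ suf m W := by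
    intro m hm1 hm2 heq
    have e1 : suf (n + 1) V = suf (n + 1) Q :=
      suf_eq_of_suffix (hVsufQ b hb) (by rw [hV]; omega)
    have e2 : suf (n + 1) U = suf (n + 1) W :=
      suf_eq_of_suffix hUsufW (by rw [hU]; omega)
    have e3 : suf (n + 1) (suf m Q) = suf (n + 1) Q :=
      suf_eq_of_suffix (suf_suffix m Q) (by rw [suf_length (by omega : m ≤ Q.length)]; omega)
    have e4 : suf (n + 1) (suf m W) = suf (n + 1) W :=
      suf_eq_of_suffix (suf_suffix m W) (by rw [suf_length (by rw [hWlen]; omega)]; omega)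
    have e5 : suf (n + 1) U = suf (n + 1) V := by
      rw [e2, ← e4, ← heq, e3, ← e1]
    have g1 := congrArg (fun l : List A => l[0]?) e5
    simp only [suf, List.getElem?_drop] at g1
    apply hle
    rw [show U.length - 1 - n = U.length - (n + 1) + 0 by omega,
      show V.length - 1 - n = V.length - (n + 1) + 0 by omega]
    exact g1
  have hsufQrs : ∀ m, m ≤ L0 →
      RightSpecial (suf m Q) x ∧ (suf m Q).length = m ∧ IsFactor (suf m Q) x :=
    fun m hm => ⟨hQrs.of_suffix (suf_suffix m Q), suf_length (by omega),
      IsFactor.of_suffix (suf_suffix m Q) hQfac⟩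
  have hsufWrs : ∀ m, m ≤ L0 →
      RightSpecial (suf m W) x ∧ (suf m W).length = m ∧ IsFactor (suf m W) x :=
    fun m hm => ⟨hWrs.of_suffix (suf_suffix m W), suf_length (by omega),
      IsFactor.of_suffix (suf_suffix m W) hWfac⟩
  have chainA : ∀ t, t ≤ L0 → t + 1 ≤ complexity x t := by
    intro t
    induction t with
    | zero => intro _; rw [complexity_zero]
    | succ t ih =>
      intro ht
      have h1 := ih (by omega)
      obtain ⟨r1, r2, r3⟩ := hsufQrs t (by omega)
      have h2 := complexity_step_one x r2 r3 r1
      omega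
  have chainB : ∀ t, n + 1 + t ≤ L0 + 1 →
      complexity x (n + 1) + 2 * t ≤ complexity x (n + 1 + t) := by
    intro t
    induction t with
    | zero => intro _; simp
    | succ t ih =>
      intro ht
      have h1 := ih (by omega)
      obtain ⟨r1, r2, r3⟩ := hsufQrs (n + 1 + t) (by omega)
      obtain ⟨s1, s2, s3⟩ := hsufWrs (n + 1 + t) (by omega)
      have hne := hdistinct (n + 1 + t) (by omega) (by omega)
      have h2 := complexity_step_two x r2 s2 hne r3 s3 r1 s1
      have h3 : n + 1 + (t + 1) = (n + 1 + t) + 1 := by omega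
      rw [h3]
      omega
  -- coverage upper bound
  have hcov : complexity x n ≤ (k + 1) + (ℓ + 1) := by
    have hsub : {v : List A | v.length = n ∧ IsFactor v x} ⊆
        ((fun j => (U.drop j).take n) '' Set.Iio (k + 1)) ∪
        ((fun j => (V.drop j).take n) '' Set.Iio (ℓ + 1)) := by
      rintro v ⟨hvl, hvf⟩
      rcases hcover v hvl hvf with ⟨j, hj, hwin⟩ | ⟨j, hj, hwin⟩
      · exact Or.inl ⟨j, by simp only [Set.mem_Iio]; omega, hwin⟩
      · exact Or.inr ⟨j, by simp only [Set.mem_Iio]; omega, hwin⟩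
    have hfin1 : ((fun j => (U.drop j).take n) '' Set.Iio (k + 1)).Finite :=
      (Set.finite_Iio _).image _
    have hfin2 : ((fun j => (V.drop j).take n) '' Set.Iio (ℓ + 1)).Finite :=
      (Set.finite_Iio _).image _
    have hcard : ∀ (c : ℕ), (Set.Iio c).ncard = c := by
      intro c
      rw [← Finset.coe_range, Set.ncard_coe_finset, Finset.card_range]
    calc complexity x n ≤ (((fun j => (U.drop j).take n) '' Set.Iio (k + 1)) ∪
          ((fun j => (V.drop j).take n) '' Set.Iio (ℓ + 1))).ncard :=
          Set.ncard_le_ncard hsub (hfin1.union hfin2)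
      _ ≤ ((fun j => (U.drop j).take n) '' Set.Iio (k + 1)).ncard +
          ((fun j => (V.drop j).take n) '' Set.Iio (ℓ + 1)).ncard := Set.ncard_union_le _ _
      _ ≤ (k + 1) + (ℓ + 1) := by
          gcongr
          · exact le_trans (Set.ncard_image_le (Set.finite_Iio _)) (le_of_eq (hcard _))
          · exact le_trans (Set.ncard_image_le (Set.finite_Iio _)) (le_of_eq (hcard _))
  have hn1 : n + 1 ≤ complexity x n := chainA n (by omega)
  have hc1 : n + 2 ≤ complexity x (n + 1) := chainA (n + 1) (by omega)
  have hc2 : complexity x (n + 1) + 2 * (k + B) ≤ complexity x (L0 + 1) := by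
    have h := chainB (k + B) (by omega)
    rwa [show n + 1 + (k + B) = L0 + 1 by omega] at h
  have hc3 : 3 * complexity x (L0 + 1) ≤ 4 * (L0 + 1) := by
    have h := hcomp (L0 + 1) (by omega)
    rw [div_le_div_iff₀ (by exact_mod_cast Nat.succ_pos L0) (by norm_num)] at h
    have h2 : ((3 * complexity x (L0 + 1) : ℕ) : ℝ) ≤ ((4 * (L0 + 1) : ℕ) : ℝ) := by
      push_cast at h ⊢
      linarith
    exact_mod_cast h2
  omega

end keypart

theorem multiplicity_unique {A : Type*} [Fintype A] (x : ℕ → A)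
    (n k ℓ b b' : ℕ) (w U V : List A)
    (hx : ¬ UltimatelyPeriodic x)
    (hshape : InftyShape x n w U V)
    (hU : U.length = n + k) (hV : V.length = n + ℓ)
    (hEss : EssentialRightSpecial U x)
    (hcomp : ∀ m : ℕ, n < m → (complexity x m : ℝ) / (m : ℝ) ≤ 4 / 3)
    (hb : 1 ≤ b) (hb' : 1 ≤ b')
    (hfac : IsFactor (cyclePow n U V b) x) (hfac' : IsFactor (cyclePow n U V b') x) :
    b = b' := by
  rcases Nat.lt_trichotomy b b' with h | h | h
  · exact (key_false x n k ℓ b b' w U V hshape hU hV hEss hcomp hb h hfac hfac').elim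
  · exact h
  · exact (key_false x n k ℓ b' b w U V hshape hU hV hEss hcomp hb' h hfac' hfac).elim
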